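/- Let F₁, F₂, F₃ be linear functionals on C(T) and let N be the 3×3 matrix with entries Nⱼᵢ = Fⱼ(φᵢ), where φᵢ = λᵢ(1 - 3λ_{i+1} - 3λ_{i+2}). If N is nonsingular, then the only polynomial p of degree at most 2 satisfying both ∫₀¹ p(t v_{j+1} + (1-t) v_{j+2}) dt = 0 and Fⱼ(p) = 0 for j = 1,2,3 is p = 0. -/
import Mathlib


open MeasureTheory

noncomputable def phiAF (lam : Fin 3 → ((Fin 2 → ℝ) →ᵃ[ℝ] ℝ)) (i : Fin 3)
    (x : Fin 2 → ℝ) : ℝ :=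
  lam i x * (1 - 3 * lam (i + 1) x - 3 * lam (i + 2) x)

/-- Monomial expansion of a bivariate polynomial of total degree at most 2. -/
lemma aux_quad_expand (p : MvPolynomial (Fin 2) ℝ) (hp : p.totalDegree ≤ 2) :
    ∃ c0 c1 c2 c3 c4 c5 : ℝ, ∀ x : Fin 2 → ℝ,
      MvPolynomial.eval x p
        = c0 + c1 * x 0 + c2 * x 1 + c3 * x 0 ^ 2 + c4 * (x 0 * x 1) + c5 * x 1 ^ 2 := by
  classical
  set e : ℕ × ℕ → (Fin 2 →₀ ℕ) := fun m => Finsupp.single 0 m.1 + Finsupp.single 1 m.2 with he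
  have heval : ∀ (m : ℕ × ℕ) (x : Fin 2 → ℝ), (∏ i, x i ^ (e m) i) = x 0 ^ m.1 * x 1 ^ m.2 := by
    intro m x
    rw [Fin.prod_univ_two]
    simp [he, Finsupp.single_apply]
  set T : Finset (ℕ × ℕ) := {(0,0),(1,0),(0,1),(2,0),(1,1),(0,2)} with hT
  have hinj : Set.InjOn e T := by
    intro a _ b _ hab
    have h0 := DFunLike.congr_fun hab (0 : Fin 2)
    have h1 := DFunLike.congr_fun hab (1 : Fin 2)
    simp [he, Finsupp.single_apply] at h0 h1
    exact Prod.ext h0 h1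
  have hsub : p.support ⊆ T.image e := by
    intro d hd
    have hle : (d 0) + (d 1) ≤ 2 := by
      have h1 := MvPolynomial.le_totalDegree hd
      have h2 : (d.sum fun _ n => n) = d 0 + d 1 := by
        rw [Finsupp.sum_fintype _ _ (fun _ => rfl), Fin.sum_univ_two]
      omega
    have hd' : d = e (d 0, d 1) := by
      ext a; fin_cases a <;> simp [he, Finsupp.single_apply]
    rw [hd']
    apply Finset.mem_image_of_mem
    have h0 : d 0 ≤ 2 := by omega
    have h1 : d 1 ≤ 2 := by omega
    interval_cases h : d 0 <;> interval_cases h' : d 1 <;> simp_all [hT]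
  refine ⟨p.coeff (e (0,0)), p.coeff (e (1,0)), p.coeff (e (0,1)), p.coeff (e (2,0)),
    p.coeff (e (1,1)), p.coeff (e (0,2)), fun x => ?_⟩
  rw [MvPolynomial.eval_eq']
  rw [Finset.sum_subset hsub (f := fun d => p.coeff d * ∏ i, x i ^ d i) (by
    intro d _ hd
    simp [MvPolynomial.notMem_support_iff.mp hd])]
  rw [Finset.sum_image (fun a ha b hb hab => hinj ha hb hab)]
  simp only [heval]
  rw [Finset.sum_insert (by decide), Finset.sum_insert (by decide),
    Finset.sum_insert (by decide), Finset.sum_insert (by decide),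
    Finset.sum_insert (by decide), Finset.sum_singleton]
  ring

/-- Barycentric reconstruction of points. -/
lemma aux_bary (v : Fin 3 → (Fin 2 → ℝ)) (lam : Fin 3 → ((Fin 2 → ℝ) →ᵃ[ℝ] ℝ))
    (hv : AffineIndependent ℝ v)
    (hdelta : ∀ i j, lam i (v j) = if i = j then 1 else 0) :
    ∀ x : Fin 2 → ℝ, x = lam 0 x • v 0 + lam 1 x • v 1 + lam 2 x • v 2 := by
  have htop : affineSpan ℝ (Set.range v) = ⊤ := by
    rw [hv.affineSpan_eq_top_iff_card_eq_finrank_add_one]; simp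
  let b : AffineBasis (Fin 3) ℝ (Fin 2 → ℝ) := ⟨v, hv, htop⟩
  intro x
  have hx := b.linear_combination_coord_eq_self x
  have hcomb : x = Finset.univ.affineCombination ℝ v (fun j => b.coord j x) := by
    have := b.affineCombination_coord_eq_self x
    exact this.symm
  have hcoord : ∀ i, lam i x = b.coord i x := by
    intro i
    have hw : (Finset.univ.sum fun j => b.coord j x) = 1 := b.sum_coord_apply_eq_one x
    calc lam i x = lam i (Finset.univ.affineCombination ℝ v (fun j => b.coord j x)) := by
          rw [← hcomb]
      _ = Finset.univ.affineCombination ℝ (fun j => lam i (v j)) (fun j => b.coord j x) := by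
          rw [Finset.map_affineCombination _ _ _ hw]; rfl
      _ = ∑ j, b.coord j x • lam i (v j) := by
          rw [Finset.affineCombination_eq_linear_combination _ _ _ hw]
      _ = b.coord i x := by
          rw [Fin.sum_univ_three]
          fin_cases i <;> simp [hdelta]
  rw [Fin.sum_univ_three] at hx
  rw [hcoord 0, hcoord 1, hcoord 2]
  exact hx.symm

/-- Evaluation of an affine map at a convex combination. -/
lemma aux_affine_comb (lam : (Fin 2 → ℝ) →ᵃ[ℝ] ℝ) (a b : Fin 2 → ℝ) (t : ℝ) :
    lam (t • a + (1-t) • b) = t * lam a + (1-t) * lam b := by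
  have h : t • a + (1-t) • b = AffineMap.lineMap b a t := by
    simp [AffineMap.lineMap_apply]
    module
  rw [h, AffineMap.apply_lineMap]
  simp [AffineMap.lineMap_apply]
  ring

open intervalIntegral in
lemma aux_integral (A B C : ℝ) :
    (∫ t in (0:ℝ)..1, (A*t^2 + B*(1-t)^2 + C*(t*(1-t)))) = A/3+B/3+C/6 := by
  have h : ∀ t : ℝ, A*t^2 + B*(1-t)^2 + C*(t*(1-t)) = B + (C - 2*B)*t + (A+B-C)*t^2 := by
    intro t; ring
  simp only [h]
  rw [intervalIntegral.integral_add, intervalIntegral.integral_add]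
  · rw [intervalIntegral.integral_const, intervalIntegral.integral_const_mul,
      intervalIntegral.integral_const_mul, integral_id]
    simp [integral_pow]
    ring
  all_goals
    apply Continuous.intervalIntegrable
    continuity

theorem enriched_unisolvence_of_nonsingular
    (v : Fin 3 → (Fin 2 → ℝ)) (lam : Fin 3 → ((Fin 2 → ℝ) →ᵃ[ℝ] ℝ))
    (hv : AffineIndependent ℝ v)
    (hdelta : ∀ i j, lam i (v j) = if i = j then 1 else 0)
    (hsum : ∀ x, lam 0 x + lam 1 x + lam 2 x = 1)
    (F : Fin 3 → (((Fin 2 → ℝ) → ℝ) →ₗ[ℝ] ℝ))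
    (N : Matrix (Fin 3) (Fin 3) ℝ)
    (hN : N = Matrix.of fun j i => F j (phiAF lam i))
    (hdet : N.det ≠ 0)
    (p : MvPolynomial (Fin 2) ℝ) (hp : p.totalDegree ≤ 2)
    (hedge : ∀ j : Fin 3,
      (∫ t in (0:ℝ)..1,
        MvPolynomial.eval (t • v (j + 1) + (1 - t) • v (j + 2)) p) = 0)
    (hF : ∀ j : Fin 3, F j (fun x => MvPolynomial.eval x p) = 0) :
    p = 0 := by
  obtain ⟨c0, c1, c2, c3, c4, c5, hc⟩ := aux_quad_expand p hp
  have hbary := aux_bary v lam hv hdelta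
  -- coordinates of x in terms of barycentric coordinates
  have hxc : ∀ (x : Fin 2 → ℝ) (k : Fin 2),
      x k = lam 0 x * v 0 k + lam 1 x * v 1 k + lam 2 x * v 2 k := by
    intro x k
    have := congrFun (hbary x) k
    simpa [Pi.add_apply, Pi.smul_apply, smul_eq_mul] using this
  -- vertex and midpoint values
  set A0 : ℝ := MvPolynomial.eval (v 0) p with hA0
  set A1 : ℝ := MvPolynomial.eval (v 1) p with hA1
  set A2 : ℝ := MvPolynomial.eval (v 2) p with hA2
  set m0 : Fin 2 → ℝ := (1/2 : ℝ) • v 1 + (1/2 : ℝ) • v 2 with hm0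
  set m1 : Fin 2 → ℝ := (1/2 : ℝ) • v 2 + (1/2 : ℝ) • v 0 with hm1
  set m2 : Fin 2 → ℝ := (1/2 : ℝ) • v 0 + (1/2 : ℝ) • v 1 with hm2
  set B0 : ℝ := 4 * MvPolynomial.eval m0 p - A1 - A2 with hB0
  set B1 : ℝ := 4 * MvPolynomial.eval m1 p - A2 - A0 with hB1
  set B2 : ℝ := 4 * MvPolynomial.eval m2 p - A0 - A1 with hB2
  -- the key pointwise quadratic representation
  have key : ∀ x : Fin 2 → ℝ, MvPolynomial.eval x p
      = A0 * (lam 0 x)^2 + A1 * (lam 1 x)^2 + A2 * (lam 2 x)^2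
        + B0 * (lam 1 x * lam 2 x) + B1 * (lam 2 x * lam 0 x) + B2 * (lam 0 x * lam 1 x) := by
    intro x
    have hm0c : ∀ k, m0 k = (v 1 k + v 2 k) / 2 := by
      intro k; simp [hm0, Pi.add_apply, Pi.smul_apply, smul_eq_mul]; ring
    have hm1c : ∀ k, m1 k = (v 2 k + v 0 k) / 2 := by
      intro k; simp [hm1, Pi.add_apply, Pi.smul_apply, smul_eq_mul]; ring
    have hm2c : ∀ k, m2 k = (v 0 k + v 1 k) / 2 := by
      intro k; simp [hm2, Pi.add_apply, Pi.smul_apply, smul_eq_mul]; ring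
    have hs := hsum x
    have hx0 := hxc x 0
    have hx1 := hxc x 1
    rw [hB0, hB1, hB2, hA0, hA1, hA2, hc x, hc (v 0), hc (v 1), hc (v 2),
      hc m0, hc m1, hc m2, hm0c 0, hm0c 1, hm1c 0, hm1c 1, hm2c 0, hm2c 1]
    set s0 := lam 0 x
    set s1 := lam 1 x
    set s2 := lam 2 x
    set ξ0 := s0 * v 0 0 + s1 * v 1 0 + s2 * v 2 0 with hξ0
    set ξ1 := s0 * v 0 1 + s1 * v 1 1 + s2 * v 2 1 with hξ1
    linear_combination (c1 + c3*(x 0 + ξ0) + c4 * x 1) * hx0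
      + (c2 + c4*ξ0 + c5*(x 1 + ξ1)) * hx1
      + (-(c0*(1+(s0+s1+s2)) + c1*ξ0 + c2*ξ1)) * hs
  have l00 : lam 0 (v 0) = 1 := by simp [hdelta]
  have l01 : lam 0 (v 1) = 0 := by simp [hdelta]
  have l02 : lam 0 (v 2) = 0 := by simp [hdelta]
  have l10 : lam 1 (v 0) = 0 := by simp [hdelta]
  have l11 : lam 1 (v 1) = 1 := by simp [hdelta]
  have l12 : lam 1 (v 2) = 0 := by simp [hdelta]
  have l20 : lam 2 (v 0) = 0 := by simp [hdelta]
  have l21 : lam 2 (v 1) = 0 := by simp [hdelta]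
  have l22 : lam 2 (v 2) = 1 := by simp [hdelta]
  -- edge integral conditions determine the B's
  have hedgeB : B0 = -2*(A1+A2) ∧ B1 = -2*(A2+A0) ∧ B2 = -2*(A0+A1) := by
    refine ⟨?_, ?_, ?_⟩
    · have h := hedge 0
      have hfin1 : (0:Fin 3)+1 = 1 := rfl
      have hfin2 : (0:Fin 3)+2 = 2 := rfl
      rw [hfin1, hfin2] at h
      have hint : ∀ t : ℝ, MvPolynomial.eval (t • v 1 + (1-t) • v 2) p
          = A1*t^2 + A2*(1-t)^2 + B0*(t*(1-t)) := by
        intro t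
        have e0 := aux_affine_comb (lam 0) (v 1) (v 2) t
        have e1 := aux_affine_comb (lam 1) (v 1) (v 2) t
        have e2 := aux_affine_comb (lam 2) (v 1) (v 2) t
        rw [key, e0, e1, e2, l01, l02, l11, l12, l21, l22]
        ring
      rw [intervalIntegral.integral_congr (fun t _ => hint t), aux_integral] at h
      linarith
    · have h := hedge 1
      have hfin1 : (1:Fin 3)+1 = 2 := rfl
      have hfin2 : (1:Fin 3)+2 = 0 := rfl
      rw [hfin1, hfin2] at h
      have hint : ∀ t : ℝ, MvPolynomial.eval (t • v 2 + (1-t) • v 0) p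
          = A2*t^2 + A0*(1-t)^2 + B1*(t*(1-t)) := by
        intro t
        have e0 := aux_affine_comb (lam 0) (v 2) (v 0) t
        have e1 := aux_affine_comb (lam 1) (v 2) (v 0) t
        have e2 := aux_affine_comb (lam 2) (v 2) (v 0) t
        rw [key, e0, e1, e2, l02, l00, l12, l10, l22, l20]
        ring
      rw [intervalIntegral.integral_congr (fun t _ => hint t), aux_integral] at h
      linarith
    · have h := hedge 2
      have hfin1 : (2:Fin 3)+1 = 0 := rfl
      have hfin2 : (2:Fin 3)+2 = 1 := rfl
      rw [hfin1, hfin2] at h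
      have hint : ∀ t : ℝ, MvPolynomial.eval (t • v 0 + (1-t) • v 1) p
          = A0*t^2 + A1*(1-t)^2 + B2*(t*(1-t)) := by
        intro t
        have e0 := aux_affine_comb (lam 0) (v 0) (v 1) t
        have e1 := aux_affine_comb (lam 1) (v 0) (v 1) t
        have e2 := aux_affine_comb (lam 2) (v 0) (v 1) t
        rw [key, e0, e1, e2, l00, l01, l10, l11, l20, l21]
        ring
      rw [intervalIntegral.integral_congr (fun t _ => hint t), aux_integral] at h
      linarith
  obtain ⟨hb0, hb1, hb2⟩ := hedgeB
  -- p is a combination of the phi functions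
  have key2 : ∀ x : Fin 2 → ℝ, MvPolynomial.eval x p
      = A0 * phiAF lam 0 x + A1 * phiAF lam 1 x + A2 * phiAF lam 2 x := by
    intro x
    have k := key x
    have hs := hsum x
    show _ = A0 * (lam 0 x * (1 - 3 * lam (0+1) x - 3 * lam (0+2) x))
      + A1 * (lam 1 x * (1 - 3 * lam (1+1) x - 3 * lam (1+2) x))
      + A2 * (lam 2 x * (1 - 3 * lam (2+1) x - 3 * lam (2+2) x))
    rw [show (0:Fin 3)+1 = 1 from rfl, show (0:Fin 3)+2 = 2 from rfl,
      show (1:Fin 3)+1 = 2 from rfl, show (1:Fin 3)+2 = 0 from rfl,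
      show (2:Fin 3)+1 = 0 from rfl, show (2:Fin 3)+2 = 1 from rfl]
    linear_combination k + (A0 * lam 0 x + A1 * lam 1 x + A2 * lam 2 x) * hs
      + (lam 1 x * lam 2 x) * hb0 + (lam 2 x * lam 0 x) * hb1 + (lam 0 x * lam 1 x) * hb2
  have hfun : (fun x => MvPolynomial.eval x p)
      = A0 • phiAF lam 0 + A1 • phiAF lam 1 + A2 • phiAF lam 2 := by
    funext x
    simpa [Pi.add_apply, Pi.smul_apply, smul_eq_mul] using key2 x
  -- linear functional conditions
  set α : Fin 3 → ℝ := ![A0, A1, A2] with hα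
  have hNα : N.mulVec α = 0 := by
    funext j
    have h0 := hF j
    rw [hfun, map_add, map_add, _root_.map_smul, _root_.map_smul, _root_.map_smul] at h0
    simp only [hN, Matrix.mulVec, dotProduct, Fin.sum_univ_three, Matrix.of_apply,
      Pi.zero_apply, hα]
    simp only [smul_eq_mul] at h0
    simp [Matrix.cons_val_zero, Matrix.cons_val_one]
    linarith [h0]
  have hα0 : α = 0 := by
    have hu : IsUnit N.det := isUnit_iff_ne_zero.mpr hdet
    calc α = (1 : Matrix (Fin 3) (Fin 3) ℝ).mulVec α := by rw [Matrix.one_mulVec]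
      _ = (N⁻¹ * N).mulVec α := by rw [Matrix.nonsing_inv_mul N hu]
      _ = N⁻¹.mulVec (N.mulVec α) := by rw [Matrix.mulVec_mulVec]
      _ = 0 := by rw [hNα, Matrix.mulVec_zero]
  have hA0z : A0 = 0 := by have := congrFun hα0 0; simpa [hα] using this
  have hA1z : A1 = 0 := by have := congrFun hα0 1; simpa [hα] using this
  have hA2z : A2 = 0 := by have := congrFun hα0 2; simpa [hα] using this
  apply MvPolynomial.funext
  intro x
  rw [key2 x, hA0z, hA1z, hA2z]
  simp
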